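/- Let k = 2 and let T ⊆ {0,1}^{Σ*} be the tree-shift defined by the forbidden set of 1-blocks {(1;1,1), (0;1,1)}, i.e. the set of binary labeled trees in which no node has both children labeled 1. Then T is strongly irreducible (SI) with gap N = 2, but T is not CPC-block gluing (CPC BG). -/

import Mathlib

namespace TreeShiftPaper

/-- Words over the alphabet `Σ = {0, …, k-1}`: nodes of the `k`-tree. -/
abbrev Word (k : ℕ) := List (Fin k)

variable {k : ℕ} {A : Type*}

/-- A set of words is prefix-closed if it contains every prefix of each of its elements. -/
def PrefixClosed (S : Set (Word k)) : Prop :=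
  ∀ w ∈ S, ∀ v : Word k, v <+: w → v ∈ S

/-- The pattern with support `S` and labels `u` appears in the labeled tree `t`. -/
def PatternAppears (t : Word k → A) (S : Set (Word k)) (u : Word k → A) : Prop :=
  ∃ s : Word k, ∀ w ∈ S, t (s ++ w) = u w

/-- The set of labeled trees avoiding every pattern of the forbidden family `F`. -/
def treeShiftOf (F : Set ((Set (Word k)) × (Word k → A))) : Set (Word k → A) :=
  {t | ∀ p ∈ F, ¬ PatternAppears t p.1 p.2}

/-- `T` is a tree-shift: it is defined by some forbidden set of patterns
(each with finite prefix-closed support). -/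
def IsTreeShift (T : Set (Word k → A)) : Prop :=
  ∃ F : Set ((Set (Word k)) × (Word k → A)),
    (∀ p ∈ F, p.1.Finite ∧ PrefixClosed p.1) ∧ T = treeShiftOf F

/-- `T` is a tree-shift of finite type: the forbidden set can be chosen finite. -/
def IsTreeSFT (T : Set (Word k → A)) : Prop :=
  ∃ F : Set ((Set (Word k)) × (Word k → A)),
    F.Finite ∧ (∀ p ∈ F, p.1.Finite ∧ PrefixClosed p.1) ∧ T = treeShiftOf F

/-- The finite word `w` occurs in the one-sided sequence `x` at position `i`. -/
def OccursAt (x : ℕ → A) (i : ℕ) (w : List A) : Prop :=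
  ∀ j : Fin w.length, x (i + (j : ℕ)) = w.get j

/-- The one-sided shift space defined by the forbidden set of words `F`. -/
def shiftOf (F : Set (List A)) : Set (ℕ → A) :=
  {x | ∀ w ∈ F, ∀ i : ℕ, ¬ OccursAt x i w}

/-- `X` is a one-sided shift space. -/
def IsShift (X : Set (ℕ → A)) : Prop := ∃ F : Set (List A), X = shiftOf F

/-- `X` is a one-sided shift of finite type. -/
def IsSFT (X : Set (ℕ → A)) : Prop :=
  ∃ F : Set (List A), F.Finite ∧ X = shiftOf F

/-- A chain: an infinite path in the tree starting at the root. -/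
def IsChain (c : ℕ → Word k) : Prop :=
  c 0 = [] ∧ ∀ n : ℕ, ∃ i : Fin k, c (n + 1) = c n ++ [i]

/-- The hom tree-shift associated with a one-sided shift space `X`: labeled trees whose
projection along every chain lies in `X`. -/
def homTree (k : ℕ) (X : Set (ℕ → A)) : Set (Word k → A) :=
  {t | ∀ c : ℕ → Word k, IsChain c → (fun n => t (c n)) ∈ X}

/-- `Y` is a sofic one-sided shift: image of an SFT under a sliding block code induced
by an `n`-block map. -/
def IsSofic (Y : Set (ℕ → A)) : Prop :=
  ∃ (B : Type) (_ : Fintype B) (X : Set (ℕ → B)) (n : ℕ) (f : (ℕ → B) → A),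
    IsSFT X ∧ (∀ u v : ℕ → B, (∀ j < n, u j = v j) → f u = f v) ∧
    (fun x : ℕ → B => fun i => f (fun j => x (i + j))) '' X = Y

/-- `T` is a sofic tree-shift: image of a tree-SFT under the map induced by an
`n`-block map. -/
def IsSoficTree (T : Set (Word k → A)) : Prop :=
  ∃ (B : Type) (_ : Fintype B) (T' : Set (Word k → B)) (n : ℕ) (g : (Word k → B) → A),
    IsTreeSFT T' ∧
    (∀ u v : Word k → B, (∀ w : Word k, w.length ≤ n → u w = v w) → g u = g v) ∧
    (fun t : Word k → B => fun w => g (fun z => t (w ++ z))) '' T' = T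

/-- The Markov tree-shift determined by `k` binary `d × d` transition matrices. -/
def markovTree (k d : ℕ) (M : Fin k → Matrix (Fin d) (Fin d) Bool) :
    Set (Word k → Fin d) :=
  {t | ∀ w : Word k, ∀ i : Fin k, M i (t w) (t (w ++ [i])) = true}

/-- The one-sided Markov (vertex) shift determined by a binary `d × d` matrix. -/
def markovShift (d : ℕ) (M : Matrix (Fin d) (Fin d) Bool) : Set (ℕ → Fin d) :=
  {x | ∀ i : ℕ, M (x i) (x (i + 1)) = true}

/-- The pattern with support `S` and labels `u` is admissible in `T`. -/
def AdmissiblePattern (T : Set (Word k → A)) (S : Set (Word k)) (u : Word k → A) : Prop :=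
  ∃ t ∈ T, ∃ s : Word k, ∀ w ∈ S, t (s ++ w) = u w

/-- The `n`-block `u` (a labeling of `Δ_n`) is admissible in `T`. -/
def AdmissibleBlock (T : Set (Word k → A)) (n : ℕ) (u : Word k → A) : Prop :=
  ∃ t ∈ T, ∃ s : Word k, ∀ w : Word k, w.length ≤ n → t (s ++ w) = u w

/-- Word distance on the `k`-tree:
`d(x,y) = |x| + |y| - 2 · max{|w| : w` a common prefix of `x` and `y}`. -/
noncomputable def wordDist (x y : Word k) : ℕ :=
  x.length + y.length - 2 * sSup {m : ℕ | ∃ w : Word k, w <+: x ∧ w <+: y ∧ w.length = m}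

/-- The boundary `∂S = {w ∈ S : wΣ ∩ S = ∅}` of a support `S`. -/
def boundary (S : Set (Word k)) : Set (Word k) :=
  {w | w ∈ S ∧ ∀ i : Fin k, w ++ [i] ∉ S}

/-- A complete prefix code: a finite prefix set such that every word of length at least
`max_{z ∈ P} |z|` has a prefix in `P`. -/
def IsCPC (P : Set (Word k)) : Prop :=
  P.Finite ∧ (∀ x ∈ P, ∀ y ∈ P, x <+: y → x = y) ∧
  ∀ w : Word k, (∀ z ∈ P, z.length ≤ w.length) → ∃ x ∈ P, x <+: w

/-- Strong irreducibility with gap `N`. -/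
def SIGap (T : Set (Word k → A)) (N : ℕ) : Prop :=
  ∀ (Su Sv : Set (Word k)) (u v : Word k → A),
    Su.Finite → PrefixClosed Su → Sv.Finite → PrefixClosed Sv →
    AdmissiblePattern T Su u → AdmissiblePattern T Sv v →
    ∀ w : Word k, (∀ h ∈ Su, N ≤ wordDist w h) →
      ∃ t ∈ T, (∀ z ∈ Su, t z = u z) ∧ ∀ z ∈ Sv, t (w ++ z) = v z

/-- `T` is strongly irreducible (SI). -/
def SI (T : Set (Word k → A)) : Prop := ∃ N : ℕ, SIGap T N

/-- `T` is block gluing (BG). -/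
def BG (T : Set (Word k → A)) : Prop :=
  ∃ N : ℕ, ∀ (n m : ℕ) (u v : Word k → A),
    AdmissibleBlock T n u → AdmissibleBlock T m v →
    ∀ w : Word k, N + n ≤ w.length →
      ∃ t ∈ T, (∀ z : Word k, z.length ≤ n → t z = u z) ∧
        ∀ z : Word k, z.length ≤ m → t (w ++ z) = v z

/-- `T` is topologically mixing (TM). -/
def TM (T : Set (Word k → A)) : Prop :=
  ∀ H₁ H₂ : Set (Word k), H₁.Finite → H₂.Finite →
    ∃ N : ℕ, ∀ t₁ ∈ T, ∀ t₂ ∈ T, ∀ w : Word k, (∀ h ∈ H₁, N ≤ wordDist w h) →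
      ∃ t ∈ T, (∀ z ∈ H₁, t z = t₁ z) ∧ ∀ z ∈ H₂, t (w ++ z) = t₂ z

/-- `T` is irreducible (IR). -/
def IR (T : Set (Word k → A)) : Prop :=
  ∀ (n m : ℕ) (u v : Word k → A),
    AdmissibleBlock T n u → AdmissibleBlock T m v →
    ∃ w : Word k, n < w.length ∧
      ∃ t ∈ T, (∀ z : Word k, z.length ≤ n → t z = u z) ∧
        ∀ z : Word k, z.length ≤ m → t (w ++ z) = v z

/-- `T` is CPC-strongly irreducible via the prefix set `P`. -/
def CPCSIWith (T : Set (Word k → A)) (P : Set (Word k)) : Prop :=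
  ∀ (Su Sv : Set (Word k)) (u v : Word k → A),
    Su.Finite → PrefixClosed Su → Sv.Finite → PrefixClosed Sv →
    AdmissiblePattern T Su u → AdmissiblePattern T Sv v →
    ∃ t ∈ T, (∀ z ∈ Su, t z = u z) ∧
      ∀ w ∈ boundary Su, ∀ z ∈ P, ∀ y ∈ Sv, t (w ++ z ++ y) = v y

/-- `T` is CPC-strongly irreducible (CPC SI). -/
def CPCSI (T : Set (Word k → A)) : Prop := ∃ P : Set (Word k), IsCPC P ∧ CPCSIWith T P

/-- `T` is uniform CPC-strongly irreducible (CPC USI): CPC SI with `P = Σ^N`. -/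
def CPCUSI (T : Set (Word k → A)) : Prop :=
  ∃ N : ℕ, CPCSIWith T {z : Word k | z.length = N}

/-- `T` is CPC-block gluing via the prefix set `P`. -/
def CPCBGWith (T : Set (Word k → A)) (P : Set (Word k)) : Prop :=
  ∀ (n m : ℕ) (u v : Word k → A),
    AdmissibleBlock T n u → AdmissibleBlock T m v →
    ∃ t ∈ T, (∀ z : Word k, z.length ≤ n → t z = u z) ∧
      ∀ w : Word k, w.length = n → ∀ z ∈ P, ∀ y : Word k, y.length ≤ m →
        t (w ++ z ++ y) = v y

/-- `T` is CPC-block gluing (CPC BG). -/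
def CPCBG (T : Set (Word k → A)) : Prop := ∃ P : Set (Word k), IsCPC P ∧ CPCBGWith T P

/-- `T` is uniform CPC-block gluing (CPC UBG): CPC BG with `P = Σ^N`. -/
def CPCUBG (T : Set (Word k → A)) : Prop :=
  ∃ N : ℕ, CPCBGWith T {z : Word k | z.length = N}

/-- `T` is CPC-irreducible (CPC IR). -/
def CPCIR (T : Set (Word k → A)) : Prop :=
  ∀ (n m : ℕ) (u v : Word k → A),
    AdmissibleBlock T n u → AdmissibleBlock T m v →
    ∃ P : Set (Word k), IsCPC P ∧ (∀ z ∈ P, n + 1 ≤ z.length) ∧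
      ∃ t ∈ T, (∀ z : Word k, z.length ≤ n → t z = u z) ∧
        ∀ w ∈ P, ∀ y : Word k, y.length ≤ m → t (w ++ y) = v y

/-- The finite word `u` is admissible in the one-sided shift space `X`. -/
def WordAdmissible (X : Set (ℕ → A)) (u : List A) : Prop :=
  ∃ x ∈ X, ∃ i : ℕ, OccursAt x i u

/-- The one-sided shift space `X` is topologically mixing. -/
def MixingShift (X : Set (ℕ → A)) : Prop :=
  ∀ u v : List A, WordAdmissible X u → WordAdmissible X v →
    ∃ N : ℕ, ∀ n ≥ N, ∃ x ∈ X, OccursAt x 0 u ∧ OccursAt x (u.length + n) v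

/-- The one-sided shift space `X` is transitive (irreducible). -/
def TransitiveShift (X : Set (ℕ → A)) : Prop :=
  ∀ u v : List A, WordAdmissible X u → WordAdmissible X v →
    ∃ x ∈ X, ∃ n : ℕ, u.length ≤ n ∧ OccursAt x 0 u ∧ OccursAt x n v

end TreeShiftPaper

namespace TreeShiftPaper

/-- The tree-shift (`k = 2`) of binary labeled trees in which no node has both children
labeled `1`, i.e. with forbidden 1-blocks `(1;1,1)` and `(0;1,1)`. -/
def noTwinOnesTree : Set (Word 2 → Fin 2) :=
  {t | ∀ w : Word 2, ¬ (t (w ++ [0]) = 1 ∧ t (w ++ [1]) = 1)}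


open Classical in
/-- Auxiliary gluing map for the SI proof. -/
noncomputable def glueMap (Su Sv : Set (Word 2)) (u v : Word 2 → Fin 2) (w : Word 2) :
    Word 2 → Fin 2 :=
  fun x => if x ∈ Su then u x
    else if w <+: x ∧ x.drop w.length ∈ Sv then v (x.drop w.length) else 0

lemma wordDist_le_of_common {k : ℕ} (x y c : Word k) (h1 : c <+: x) (h2 : c <+: y) :
    wordDist x y ≤ x.length + y.length - 2 * c.length := by
  have hbdd : BddAbove {m : ℕ | ∃ w : Word k, w <+: x ∧ w <+: y ∧ w.length = m} := by
    refine ⟨x.length, ?_⟩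
    rintro m ⟨w, hw, -, rfl⟩
    exact hw.length_le
  have hle : c.length ≤ sSup {m : ℕ | ∃ w : Word k, w <+: x ∧ w <+: y ∧ w.length = m} :=
    le_csSup hbdd ⟨c, h1, h2, rfl⟩
  unfold wordDist
  exact Nat.sub_le_sub_left (Nat.mul_le_mul_left 2 hle) _

lemma fin2_cases (i : Fin 2) : i = 0 ∨ i = 1 := by
  fin_cases i <;> simp

lemma cpc_siblings {P : Set (Word 2)} (h : IsCPC P) (heps : ([] : Word 2) ∉ P) :
    ∃ q : Word 2, q ++ [0] ∈ P ∧ q ++ [1] ∈ P := by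
  obtain ⟨Pfin, Ppre, Pcomp⟩ := h
  obtain ⟨L, hL⟩ : ∃ L, ∀ z ∈ P, z.length ≤ L := by
    obtain ⟨L, hL⟩ := (Pfin.image List.length).bddAbove
    exact ⟨L, fun z hz => hL ⟨z, hz, rfl⟩⟩
  obtain ⟨x0, hx0, -⟩ := Pcomp (List.replicate L 0) (fun z hz => by simpa using hL z hz)
  obtain ⟨z, hzP, hzmax⟩ := Set.Finite.exists_maximalFor List.length P Pfin ⟨x0, hx0⟩
  have hzmax' : ∀ z' ∈ P, z'.length ≤ z.length := by
    intro z' hz'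
    by_contra hlt
    push_neg at hlt
    have := hzmax (j := z') hz' (le_of_lt hlt)
    omega
  have hzne : z ≠ [] := fun hz => heps (hz ▸ hzP)
  have hz : z.dropLast ++ [z.getLast hzne] = z := List.dropLast_append_getLast hzne
  have hzlen : z.length = z.dropLast.length + 1 := by
    conv_lhs => rw [← hz]
    simp
  have key : ∀ j : Fin 2, z.dropLast ++ [j] ∈ P := by
    intro j
    have hlen : ∀ z' ∈ P, z'.length ≤ (z.dropLast ++ [j]).length := by
      intro z' hz'
      have := hzmax' z' hz'
      simp only [List.length_append, List.length_singleton]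
      omega
    obtain ⟨p, hpP, hpre⟩ := Pcomp (z.dropLast ++ [j]) hlen
    have hple : p.length ≤ z.dropLast.length + 1 := by simpa using hpre.length_le
    rcases Nat.lt_or_ge p.length (z.dropLast.length + 1) with hlt | hge
    · exfalso
      have hpq : p <+: z.dropLast :=
        List.prefix_of_prefix_length_le hpre ⟨[j], rfl⟩ (by omega)
      have hpz : p <+: z := by
        rw [← hz]
        exact hpq.trans ⟨[z.getLast hzne], rfl⟩
      have hpe := Ppre p hpP z hzP hpz
      have := congrArg List.length hpe
      omega
    · have hpe : p = z.dropLast ++ [j] := hpre.eq_of_length (by simp; omega)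
      exact hpe ▸ hpP
  exact ⟨z.dropLast, key 0, key 1⟩

/-- `noTwinOnesTree` is strongly irreducible with gap `N = 2`, but is not CPC-block
gluing. -/
theorem stmt18 : SIGap noTwinOnesTree 2 ∧ ¬ CPCBG noTwinOnesTree := by
  constructor
  · -- Strong irreducibility with gap 2
    intro Su Sv u v hSuF pcU hSvF pcV hu hv w gap
    classical
    obtain ⟨tu, htu, su, hus⟩ := hu
    obtain ⟨tv, htv, sv, hvs⟩ := hv
    have F1 : ∀ x : Word 2, w <+: x → x ∉ Su := by
      intro x hpre hx
      have hwSu : w ∈ Su := pcU x hx w hpre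
      have h2 := gap w hwSu
      have h0 := wordDist_le_of_common w w w List.prefix_rfl List.prefix_rfl
      omega
    have F2 : ∀ (p : Word 2) (i : Fin 2), w = p ++ [i] → p ∉ Su := by
      intro p i hw hp
      have h2 := gap p hp
      have h0 := wordDist_le_of_common w p p (hw ▸ (⟨[i], rfl⟩ : p <+: p ++ [i])) List.prefix_rfl
      have hlen : w.length = p.length + 1 := by rw [hw]; simp
      omega
    set t : Word 2 → Fin 2 := glueMap Su Sv u v w with ht_def
    have hchar : ∀ x, t x = 1 →
        (x ∈ Su ∧ u x = 1) ∨ (w <+: x ∧ x.drop w.length ∈ Sv ∧ v (x.drop w.length) = 1) := by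
      intro x hx
      rw [ht_def] at hx
      unfold glueMap at hx
      by_cases h1 : x ∈ Su
      · rw [if_pos h1] at hx
        exact Or.inl ⟨h1, hx⟩
      · rw [if_neg h1] at hx
        by_cases h2 : w <+: x ∧ x.drop w.length ∈ Sv
        · rw [if_pos h2] at hx
          exact Or.inr ⟨h2.1, h2.2, hx⟩
        · rw [if_neg h2] at hx
          exact absurd hx (by decide)
    have htT : t ∈ noTwinOnesTree := by
      intro p hcon
      obtain ⟨h0, h1⟩ := hcon
      have pp0 : p <+: p ++ [0] := ⟨[0], rfl⟩
      have pp1 : p <+: p ++ [1] := ⟨[1], rfl⟩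
      rcases hchar _ h0 with ⟨hc0, hu0⟩ | ⟨hpre0, hd0, hv0⟩ <;>
        rcases hchar _ h1 with ⟨hc1, hu1⟩ | ⟨hpre1, hd1, hv1⟩
      · -- both in Su
        refine htu (su ++ p) ⟨?_, ?_⟩
        · rw [List.append_assoc, hus _ hc0]; exact hu0
        · rw [List.append_assoc, hus _ hc1]; exact hu1
      · -- p++[0] ∈ Su, p++[1] in v-region
        rcases Nat.lt_or_ge p.length w.length with hlen | hlen
        · have hwe : w = p ++ [1] := hpre1.eq_of_length
            (by have := hpre1.length_le; simp at this ⊢; omega)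
          exact F2 p 1 hwe (pcU _ hc0 p pp0) 
        · have hwp : w <+: p := List.prefix_of_prefix_length_le hpre1 pp1 hlen
          exact F1 _ (hwp.trans pp0) hc0
      · -- p++[1] ∈ Su, p++[0] in v-region
        rcases Nat.lt_or_ge p.length w.length with hlen | hlen
        · have hwe : w = p ++ [0] := hpre0.eq_of_length
            (by have := hpre0.length_le; simp at this ⊢; omega)
          exact F2 p 0 hwe (pcU _ hc1 p pp1)
        · have hwp : w <+: p := List.prefix_of_prefix_length_le hpre0 pp0 hlen
          exact F1 _ (hwp.trans pp1) hc1
      · -- both in v-region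
        rcases Nat.lt_or_ge p.length w.length with hlen | hlen
        · have e0 : w = p ++ [0] := hpre0.eq_of_length
            (by have := hpre0.length_le; simp at this ⊢; omega)
          have e1 : w = p ++ [1] := hpre1.eq_of_length
            (by have := hpre1.length_le; simp at this ⊢; omega)
          have h01 : p ++ [(0 : Fin 2)] = p ++ [1] := e0 ▸ e1
          simp at h01
        · have hwp : w <+: p := List.prefix_of_prefix_length_le hpre0 pp0 hlen
          have hdrop : ∀ i : Fin 2, (p ++ [i]).drop w.length = p.drop w.length ++ [i] :=
            fun i => List.drop_append_of_le_length hlen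
          rw [hdrop 0] at hd0 hv0
          rw [hdrop 1] at hd1 hv1
          refine htv (sv ++ p.drop w.length) ⟨?_, ?_⟩
          · rw [List.append_assoc, hvs _ hd0]; exact hv0
          · rw [List.append_assoc, hvs _ hd1]; exact hv1
    refine ⟨t, htT, ?_, ?_⟩
    · intro z hz
      rw [ht_def]
      unfold glueMap
      rw [if_pos hz]
    · intro z hz
      have hns : w ++ z ∉ Su := F1 _ ⟨z, rfl⟩
      rw [ht_def]
      unfold glueMap
      rw [if_neg hns, if_pos ⟨⟨z, rfl⟩, by rw [List.drop_left]; exact hz⟩, List.drop_left]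
  · -- not CPC block gluing
    rintro ⟨P, hPcpc, hBG⟩
    classical
    have hv1 : AdmissibleBlock noTwinOnesTree 0 (fun _ => (1 : Fin 2)) := by
      refine ⟨fun x => if x = [] then 1 else 0, ?_, [], ?_⟩
      · intro p hp
        have h : (if p ++ [(0 : Fin 2)] = [] then (1 : Fin 2) else 0) = 1 := hp.1
        rw [if_neg (by simp)] at h
        exact absurd h (by decide)
      · intro y hy
        have hye : y = [] := List.length_eq_zero_iff.mp (Nat.le_zero.mp hy)
        simp [hye]
    have hu0 : ∀ n, AdmissibleBlock noTwinOnesTree n (fun _ => (0 : Fin 2)) := by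
      intro n
      refine ⟨fun _ => 0, fun p hp => ?_, [], fun y hy => rfl⟩
      have h : (0 : Fin 2) = 1 := hp.1
      exact absurd h (by decide)
    by_cases heps : ([] : Word 2) ∈ P
    · obtain ⟨t, htT, -, h2⟩ := hBG 1 0 (fun _ => 0) (fun _ => 1) (hu0 1) hv1
      have e0 : t [0] = 1 := by simpa using h2 [0] rfl [] heps [] (le_refl 0)
      have e1 : t [1] = 1 := by simpa using h2 [1] rfl [] heps [] (le_refl 0)
      exact htT [] ⟨by simpa using e0, by simpa using e1⟩
    · obtain ⟨t, htT, -, h2⟩ := hBG 0 0 (fun _ => 0) (fun _ => 1) (hu0 0) hv1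
      obtain ⟨q, hq0, hq1⟩ := cpc_siblings hPcpc heps
      have e0 : t (q ++ [0]) = 1 := by simpa using h2 [] rfl (q ++ [0]) hq0 [] (le_refl 0)
      have e1 : t (q ++ [1]) = 1 := by simpa using h2 [] rfl (q ++ [1]) hq1 [] (le_refl 0)
      exact htT q ⟨e0, e1⟩

end TreeShiftPaper
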